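/- For every integer k with k ≡ 7 (mod 8), the following are equivalent: (1) there exist integers x, y, z with x² + 3y² + 3z² = k; (2) there exist odd integers x, y, z with x² + 3y² + 3z² = k. -/
import Mathlib

lemma sq_mod8_odd (x : ℤ) (h : Odd x) : x ^ 2 % 8 = 1 := by
  obtain ⟨m, rfl⟩ := h
  obtain ⟨t, ht⟩ := Int.even_mul_succ_self m
  have : (2*m+1)^2 = 8*t + 1 := by rw [show (8:ℤ)*t = 4*(m*(m+1)) by omega]; ring
  omega

lemma sq_mod8_even (x : ℤ) (h : Even x) : x ^ 2 % 8 = 0 ∨ x ^ 2 % 8 = 4 := by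
  obtain ⟨m, rfl⟩ := h
  rcases Int.even_or_odd m with ⟨s, rfl⟩ | ⟨s, rfl⟩
  · left
    have : (s+s+(s+s))^2 = 8*(2*s^2) := by ring
    omega
  · right
    have : ((2*s+1)+(2*s+1))^2 = 8*(2*s^2+2*s) + 4 := by ring
    omega

/-- key descent: two even coordinates whose partial value is `≡ 4 mod 8`
can be replaced by odd coordinates via `(a-3b)² + 3(a+b)² = 4(a² + 3b²)`. -/
lemma key (x y : ℤ) (hx : Even x) (hy : Even y) (h : (x ^ 2 + 3 * y ^ 2) % 8 = 4) :
    ∃ x' y' : ℤ, Odd x' ∧ Odd y' ∧ x' ^ 2 + 3 * y' ^ 2 = x ^ 2 + 3 * y ^ 2 := by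
  obtain ⟨a, rfl⟩ := hx
  obtain ⟨b, rfl⟩ := hy
  have h4 : (a+a)^2 + 3*(b+b)^2 = 4*(a^2+3*b^2) := by ring
  have hodd : (a^2 + 3*b^2) % 2 = 1 := by omega
  have hab : (a + b) % 2 = 1 := by
    rcases Int.even_or_odd a with ⟨s, rfl⟩ | ⟨s, rfl⟩ <;>
      rcases Int.even_or_odd b with ⟨t, rfl⟩ | ⟨t, rfl⟩
    · have : (s+s)^2 + 3*(t+t)^2 = 2*(2*s^2+6*t^2) := by ring
      omega
    · have : (s+s)^2 + 3*(2*t+1)^2 = 2*(2*s^2+6*t^2+6*t+1) + 1 := by ring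
      omega
    · have : (2*s+1)^2 + 3*(t+t)^2 = 2*(2*s^2+2*s+6*t^2) + 1 := by ring
      omega
    · have : (2*s+1)^2 + 3*(2*t+1)^2 = 2*(2*s^2+2*s+6*t^2+6*t+2) := by ring
      omega
  refine ⟨a - 3*b, a + b, ?_, ?_, by ring⟩
  · exact Int.odd_iff.mpr (by omega)
  · exact Int.odd_iff.mpr hab

/-- For an integer `k ≡ 7 (mod 8)`, `k` is represented by `G(x,y,z) = x² + 3y² + 3z²`
over ℤ if and only if it is represented with all three coordinates odd. -/
theorem G_represents_iff_odd_representation (k : ℤ) (hk : k ≡ 7 [ZMOD 8]) :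
    (∃ x y z : ℤ, x ^ 2 + 3 * y ^ 2 + 3 * z ^ 2 = k) ↔
      (∃ x y z : ℤ, Odd x ∧ Odd y ∧ Odd z ∧ x ^ 2 + 3 * y ^ 2 + 3 * z ^ 2 = k) := by
  have hk8 : k % 8 = 7 := by unfold Int.ModEq at hk; omega
  constructor
  · rintro ⟨x, y, z, h⟩
    rcases Int.even_or_odd x with hx | hx <;>
    rcases Int.even_or_odd y with hy | hy <;>
    rcases Int.even_or_odd z with hz | hz
    · -- all even: impossible mod 8
      exfalso
      rcases sq_mod8_even x hx with h1 | h1 <;> rcases sq_mod8_even y hy with h2 | h2 <;>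
        rcases sq_mod8_even z hz with h3 | h3 <;> omega
    · -- x, y even, z odd: repair x, y
      have h3 := sq_mod8_odd z hz
      have h4 : (x ^ 2 + 3 * y ^ 2) % 8 = 4 := by
        rcases sq_mod8_even x hx with h1 | h1 <;> rcases sq_mod8_even y hy with h2 | h2 <;> omega
      obtain ⟨x', y', hx', hy', he⟩ := key x y hx hy h4
      exact ⟨x', y', z, hx', hy', hz, by omega⟩
    · -- x, z even, y odd: repair x, z
      have h2 := sq_mod8_odd y hy
      have h4 : (x ^ 2 + 3 * z ^ 2) % 8 = 4 := by
        rcases sq_mod8_even x hx with h1 | h1 <;> rcases sq_mod8_even z hz with h3 | h3 <;> omega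
      obtain ⟨x', z', hx', hz', he⟩ := key x z hx hz h4
      exact ⟨x', y, z', hx', hy, hz', by omega⟩
    · exfalso
      have h2 := sq_mod8_odd y hy; have h3 := sq_mod8_odd z hz
      rcases sq_mod8_even x hx with h1 | h1 <;> omega
    · exfalso
      have h1 := sq_mod8_odd x hx
      rcases sq_mod8_even y hy with h2 | h2 <;> rcases sq_mod8_even z hz with h3 | h3 <;> omega
    · exfalso
      have h1 := sq_mod8_odd x hx; have h3 := sq_mod8_odd z hz
      rcases sq_mod8_even y hy with h2 | h2 <;> omega
    · exfalso
      have h1 := sq_mod8_odd x hx; have h2 := sq_mod8_odd y hy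
      rcases sq_mod8_even z hz with h3 | h3 <;> omega
    · exact ⟨x, y, z, hx, hy, hz, h⟩
  · rintro ⟨x, y, z, _, _, _, h⟩
    exact ⟨x, y, z, h⟩
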